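/- (Abbas–Bouroubi identity.) Let f(x) = 1 + ∑_{i≥1} f_i x^i be a formal power series and define f_m(i) = the m-th derivative of f(x)^i evaluated at x = 0 (equivalently, f_m(i) = m! · [x^m] f(x)^i). Then for all integers m ≥ r ≥ 1, B_{m,r}(1, f₁(2), f₂(3), f₃(4), …) = C(m-1, r-1) · f_{m-r}(m), where the k-th argument of the Bell polynomial is f_{k-1}(k). -/

import Mathlib

/-- Index set for the partial Bell polynomial `B_{m,r}`: sequences
`(r₁, …, r_m)` of nonnegative integers with `r₁+⋯+r_m = r` and
`r₁+2r₂+⋯+m·r_m = m`. -/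
def bellIndex (m r : ℕ) : Finset (Fin m → ℕ) :=
  (Fintype.piFinset fun _ => Finset.range (m+1)).filter
    fun c => (∑ i, c i) = r ∧ (∑ i, (i.1+1) * c i) = m

/-- The partial Bell polynomial `B_{m,r}(x₁,x₂,…)`, where `x i` is the `i`-th variable:
`B_{m,r} = ∑ m!/(r₁!⋯r_m!) ∏ (x_i/i!)^{r_i}`. -/
def partialBell (x : ℕ → ℚ) (m r : ℕ) : ℚ :=
  ∑ c ∈ bellIndex m r,
    ((m.factorial : ℚ) / ∏ i, ((c i).factorial : ℚ)) *
      ∏ i, (x (i.1+1) / ((i.1+1).factorial : ℚ)) ^ c i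


namespace AB

/-- prefix sums -/
def P (e : ℕ → ℕ) (s : ℕ) : ℕ := ∑ j ∈ Finset.range s, e j

/-- dominance: all prefix "ballot" sums positive -/
def Dom (n : ℕ) (e : ℕ → ℕ) : Prop := ∀ s, 1 ≤ s → s ≤ n → P e s < s

lemma P_congr {s : ℕ} {a b : ℕ → ℕ} (h : ∀ j < s, a j = b j) : P a s = P b s :=
  Finset.sum_congr rfl fun j hj => h j (Finset.mem_range.1 hj)

lemma Dom_congr {n : ℕ} {a b : ℕ → ℕ} (h : ∀ j < n, a j = b j) : Dom n a ↔ Dom n b := by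
  unfold Dom
  constructor <;> intro H s h1 hs
  · rw [← P_congr (fun j hj => h j (lt_of_lt_of_le hj hs))]; exact H s h1 hs
  · rw [P_congr (fun j hj => h j (lt_of_lt_of_le hj hs))]; exact H s h1 hs

@[to_additive]
lemma prod_rot {M : Type*} [CommMonoid M] (n : ℕ) :
    ∀ (t : ℕ) (g : ℕ → M), ∏ j ∈ Finset.range n, g ((j + t) % n) = ∏ j ∈ Finset.range n, g j := by
  have shift1 : ∀ h : ℕ → M, ∏ j ∈ Finset.range n, h ((j + 1) % n) = ∏ j ∈ Finset.range n, h j := by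
    intro h
    cases n with
    | zero => simp
    | succ m =>
      rw [Finset.prod_range_succ, Finset.prod_range_succ']
      have h2 : (m + 1) % (m + 1) = 0 := Nat.mod_self _
      rw [h2]
      congr 1
      refine Finset.prod_congr rfl fun j hj => ?_
      rw [Nat.mod_eq_of_lt (by have := Finset.mem_range.1 hj; omega)]
  intro t
  induction t with
  | zero =>
    intro g
    refine Finset.prod_congr rfl fun j hj => ?_
    rw [Nat.add_zero, Nat.mod_eq_of_lt (Finset.mem_range.1 hj)]
  | succ t ih =>
    intro g
    calc ∏ j ∈ Finset.range n, g ((j + (t+1)) % n)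
        = ∏ j ∈ Finset.range n, (fun x => g ((x + 1) % n)) ((j + t) % n) := by
          refine Finset.prod_congr rfl fun j _ => ?_
          simp only []
          rw [Nat.mod_add_mod]
          ring_nf
      _ = ∏ j ∈ Finset.range n, g ((j + 1) % n) := ih (fun x => g ((x + 1) % n))
      _ = ∏ j ∈ Finset.range n, g j := shift1 g

open scoped Classical in
/-- The Dvoretzky–Motzkin cycle lemma, weighted-count form. -/
lemma cycle_count (n i : ℕ) (e : ℕ → ℕ) (hi : 1 ≤ i)
    (hsum : P e n + i = n) :
    ((Finset.range n).filter (fun t => Dom n (fun j => e ((j + t) % n)))).card = i := by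
  have hn : 1 ≤ n := le_trans hi (by omega)
  set D : ℕ → ℤ := fun s => (s : ℤ) - ∑ j ∈ Finset.range s, (e (j % n) : ℤ) with hD
  have hstep : ∀ s, D (s+1) = D s + 1 - e (s % n) := by
    intro s; simp only [hD, Finset.sum_range_succ]; push_cast; ring
  have hstep_le : ∀ s, D (s+1) ≤ D s + 1 := by
    intro s; rw [hstep]; have : (0:ℤ) ≤ e (s % n) := Int.natCast_nonneg _; omega
  have hDn : D n = i := by
    have : ∑ j ∈ Finset.range n, (e (j % n) : ℤ) = ∑ j ∈ Finset.range n, (e j : ℤ) :=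
      Finset.sum_congr rfl fun j hj => by rw [Nat.mod_eq_of_lt (Finset.mem_range.1 hj)]
    have h2 : ∑ j ∈ Finset.range n, (e j : ℤ) = (P e n : ℤ) := by
      simp [P]
    simp only [hD, this, h2]
    omega
  have hper : ∀ s, D (s + n) = D s + i := by
    intro s
    induction s with
    | zero => rw [Nat.zero_add, hDn]; simp [hD]
    | succ s ih =>
      have h1 : s + 1 + n = (s + n) + 1 := by ring
      rw [h1, hstep, ih, hstep]
      have : (s + n) % n = s % n := Nat.add_mod_right s n
      rw [this]; ring
  -- segment formula
  have hseg : ∀ t s, D (t + s) = D t + s - ∑ j ∈ Finset.range s, (e ((t + j) % n) : ℤ) := by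
    intro t s
    induction s with
    | zero => simp
    | succ s ih =>
      have h1 : t + (s+1) = (t + s) + 1 := by ring
      rw [h1, hstep, ih, Finset.sum_range_succ]
      push_cast; ring
  have hdomiff : ∀ t, Dom n (fun j => e ((j + t) % n)) ↔
      (∀ s, 1 ≤ s → s ≤ n → D t < D (t + s)) := by
    intro t
    unfold Dom P
    have key : ∀ s, (∑ j ∈ Finset.range s, e ((j + t) % n) < s) ↔ D t < D (t + s) := by
      intro s
      rw [hseg t s]
      have : ∑ j ∈ Finset.range s, (e ((t + j) % n) : ℤ)
          = ((∑ j ∈ Finset.range s, e ((j + t) % n) : ℕ) : ℤ) := by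
        push_cast
        exact Finset.sum_congr rfl fun j _ => by rw [Nat.add_comm t j]
      rw [this]
      omega
    constructor
    · intro H s h1 hs; exact (key s).1 (H s h1 hs)
    · intro H s h1 hs; exact (key s).2 (H s h1 hs)
  set Good : ℕ → Prop := fun t => ∀ s, t < s → D t < D s with hGood
  have hwin : ∀ t, (∀ s, t < s → s ≤ t + n → D t < D s) → Good t := by
    intro t h s
    induction s using Nat.strong_induction_on with
    | _ s ih =>
      intro hts
      by_cases hc : s ≤ t + n
      · exact h s hts hc
      · have h1 : t < s - n := by omega
        have h2 : s - n < s := by omega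
        have h3 : (s - n) + n = s := by omega
        have := ih (s - n) h2 h1
        have h4 := hper (s - n)
        rw [h3] at h4
        omega
  have hGoodIff : ∀ t, Dom n (fun j => e ((j + t) % n)) ↔ Good t := by
    intro t
    rw [hdomiff t]
    constructor
    · intro H
      refine hwin t fun s hts hsn => ?_
      have h1 : s = t + (s - t) := by omega
      rw [h1]; exact H (s - t) (by omega) (by omega)
    · intro H s h1 hs
      exact H (t + s) (by omega)
  -- replace filter predicate by Good
  have hfiltereq : (Finset.range n).filter (fun t => Dom n (fun j => e ((j + t) % n)))
      = (Finset.range n).filter Good := by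
    apply Finset.filter_congr
    intro t _
    simp only [hGoodIff t]
  rw [hfiltereq]
  -- pick t₀: the largest minimizer of D on range n
  obtain ⟨tm, htm, htmmin⟩ := Finset.exists_min_image (Finset.range n) D ⟨0, by simpa using (show 0 < n by omega)⟩
  set A := (Finset.range n).filter (fun s => ∀ s' ∈ Finset.range n, D s ≤ D s') with hA
  have hAne : A.Nonempty := ⟨tm, by simp only [hA, Finset.mem_filter]; exact ⟨htm, htmmin⟩⟩
  set t₀ := A.max' hAne with ht₀
  have ht₀A : t₀ ∈ A := Finset.max'_mem _ _
  have ht₀n : t₀ < n := by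
    have := Finset.mem_filter.1 ht₀A
    exact Finset.mem_range.1 this.1
  have ht₀min : ∀ s < n, D t₀ ≤ D s := by
    intro s hs
    exact (Finset.mem_filter.1 ht₀A).2 s (Finset.mem_range.2 hs)
  have ht₀strict : ∀ s, t₀ < s → s < n → D t₀ < D s := by
    intro s hts hs
    rcases lt_or_eq_of_le (ht₀min s hs) with h | h
    · exact h
    · exfalso
      have hsA : s ∈ A := by
        simp only [hA, Finset.mem_filter, Finset.mem_range]
        exact ⟨hs, fun s' hs' => h ▸ ht₀min s' hs'⟩
      have := Finset.le_max' A s hsA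
      omega
  have hGt₀ : Good t₀ := by
    refine hwin t₀ fun s hts hsn => ?_
    by_cases hc : s < n
    · exact ht₀strict s hts hc
    · have h1 : s - n < n := by omega
      have h3 : (s - n) + n = s := by omega
      have h4 := hper (s - n); rw [h3] at h4
      have h5 := ht₀min (s - n) h1
      omega
  have hGoodShift : ∀ t, Good t ↔ Good (t + n) := by
    intro t
    constructor
    · intro H s hs
      have h1 : t < s - n := by omega
      have h3 : (s - n) + n = s := by omega
      have h4 := hper (s - n); rw [h3] at h4
      have h5 := H (s - n) h1
      have h6 := hper t
      omega
    · intro H s hs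
      have h1 := H (s + n) (by omega)
      have h4 := hper s
      have h6 := hper t
      omega
  -- window shift: count over range n equals count over Ico t₀ (t₀+n)
  have hcount_shift : ((Finset.range n).filter Good).card
      = ((Finset.Ico t₀ (t₀ + n)).filter Good).card := by
    have hsplit1 : Finset.range n = Finset.Ico 0 t₀ ∪ Finset.Ico t₀ n := by
      rw [Finset.range_eq_Ico, Finset.Ico_union_Ico_eq_Ico (by omega) (by omega)]
    have hsplit2 : Finset.Ico t₀ (t₀ + n) = Finset.Ico t₀ n ∪ Finset.Ico n (t₀ + n) := by
      rw [Finset.Ico_union_Ico_eq_Ico (by omega) (by omega)]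
    have hdisj1 : Disjoint (Finset.Ico 0 t₀ |>.filter Good) (Finset.Ico t₀ n |>.filter Good) := by
      apply Finset.disjoint_filter_filter
      apply Finset.Ico_disjoint_Ico_consecutive
    have hdisj2 : Disjoint (Finset.Ico t₀ n |>.filter Good) (Finset.Ico n (t₀+n) |>.filter Good) := by
      apply Finset.disjoint_filter_filter
      apply Finset.Ico_disjoint_Ico_consecutive
    rw [hsplit1, hsplit2, Finset.filter_union, Finset.filter_union,
      Finset.card_union_of_disjoint hdisj1, Finset.card_union_of_disjoint hdisj2]
    have hbij : ((Finset.Ico 0 t₀).filter Good).card = ((Finset.Ico n (t₀ + n)).filter Good).card := by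
      apply Finset.card_nbij (i := fun t => t + n)
      · intro t ht
        simp only [Finset.mem_coe, Finset.mem_filter, Finset.mem_Ico] at ht ⊢
        exact ⟨⟨by omega, by omega⟩, (hGoodShift t).1 ht.2⟩
      · intro a _ b _ hab
        simpa using hab
      · intro s hs
        simp only [Finset.coe_filter, Set.mem_setOf_eq, Finset.mem_Ico, Set.mem_image] at hs ⊢
        refine ⟨s - n, ⟨⟨by omega, by omega⟩, ?_⟩, by omega⟩
        have h3 : (s - n) + n = s := by omega
        rw [hGoodShift (s - n), h3]
        exact hs.2
    omega
  rw [hcount_shift]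
  -- final: bijection between range i and goods in the window
  have hwindow_lb : ∀ s, t₀ ≤ s → s < t₀ + n → D t₀ ≤ D s := by
    intro s h1 h2
    rcases eq_or_lt_of_le h1 with h | h
    · rw [← h]
    · exact le_of_lt (hGt₀ s h)
  have hvi : ∀ t ∈ Finset.Ico t₀ (t₀ + n), Good t → D t < D t₀ + i := by
    intro t ht hG
    have h1 := hG (t₀ + n) (by have := (Finset.mem_Ico.1 ht).2; omega)
    have h2 := hper t₀
    omega
  have hlamset : ∀ v : ℕ,
      ((Finset.Ico t₀ (t₀ + n)).filter (fun s => D s ≤ D t₀ + v)).Nonempty := by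
    intro v
    refine ⟨t₀, Finset.mem_filter.2 ⟨Finset.mem_Ico.2 ⟨le_refl _, by omega⟩, ?_⟩⟩
    have : (0:ℤ) ≤ (v:ℤ) := Int.natCast_nonneg _
    omega
  set lam : ℕ → ℕ := fun v =>
    (((Finset.Ico t₀ (t₀ + n)).filter (fun s => D s ≤ D t₀ + v)).max' (hlamset v)) with hlam
  have hlam_mem : ∀ v : ℕ, lam v ∈ Finset.Ico t₀ (t₀ + n) ∧ D (lam v) ≤ D t₀ + v := by
    intro v
    have := Finset.max'_mem _ (hlamset v)
    exact Finset.mem_filter.1 this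
  have hlam_le : ∀ v : ℕ, ∀ s ∈ Finset.Ico t₀ (t₀ + n), D s ≤ D t₀ + v → s ≤ lam v := by
    intro v s hs hDs
    exact Finset.le_max' _ s (Finset.mem_filter.2 ⟨hs, hDs⟩)
  have hlam_gt : ∀ v : ℕ, ∀ s ∈ Finset.Ico t₀ (t₀ + n), lam v < s → D t₀ + v < D s := by
    intro v s hs hlt
    by_contra hcon
    have := hlam_le v s hs (by omega)
    omega
  have hlamD : ∀ v : ℕ, v < i → D (lam v) = D t₀ + v := by
    intro v hv
    have hmem := hlam_mem v
    have hIco := Finset.mem_Ico.1 hmem.1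
    have hle := hstep_le (lam v)
    by_cases hc : lam v + 1 < t₀ + n
    · have := hlam_gt v (lam v + 1) (Finset.mem_Ico.2 ⟨by omega, hc⟩) (by omega)
      omega
    · have heq : lam v + 1 = t₀ + n := by omega
      have h2 := hper t₀
      rw [← heq] at h2
      have : (v:ℤ) < (i:ℤ) := by exact_mod_cast hv
      omega
  have hlam_good : ∀ v : ℕ, v < i → Good (lam v) := by
    intro v hv
    have hmem := hlam_mem v
    have hIco := Finset.mem_Ico.1 hmem.1
    apply hwin
    intro s hs1 hs2
    by_cases hc : s < t₀ + n
    · have := hlam_gt v s (Finset.mem_Ico.2 ⟨by omega, hc⟩) hs1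
      have := hlamD v hv
      omega
    · have h1 : t₀ ≤ s - n := by omega
      have h2 : s - n < t₀ + n := by omega
      have h3 : (s - n) + n = s := by omega
      have h4 := hper (s - n); rw [h3] at h4
      have h5 := hwindow_lb (s - n) h1 h2
      have h6 := hlamD v hv
      have : (v:ℤ) < (i:ℤ) := by exact_mod_cast hv
      omega
  have : ((Finset.range i).card = ((Finset.Ico t₀ (t₀ + n)).filter Good).card) := by
    apply Finset.card_nbij' (i := fun v => lam v) (j := fun t => (D t - D t₀).toNat)
    · intro v hv
      have hv' := Finset.mem_range.1 hv
      exact Finset.mem_filter.2 ⟨(hlam_mem v).1, hlam_good v hv'⟩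
    · intro t ht
      have ht' := Finset.mem_filter.1 ht
      have hIco := Finset.mem_Ico.1 ht'.1
      have h1 := hwindow_lb t hIco.1 hIco.2
      have h2 := hvi t ht'.1 ht'.2
      refine Finset.mem_range.2 ?_
      dsimp only
      omega
    · intro v hv
      have hv' := Finset.mem_range.1 hv
      have := hlamD v hv'
      dsimp only
      omega
    · intro t ht
      have ht' := Finset.mem_filter.1 ht
      have hIco := Finset.mem_Ico.1 ht'.1
      have h1 := hwindow_lb t hIco.1 hIco.2
      have h2 := hvi t ht'.1 ht'.2
      set v := (D t - D t₀).toNat with hv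
      have hvZ : (v:ℤ) = D t - D t₀ := by omega
      have hvi' : v < i := by omega
      apply le_antisymm
      · apply Finset.max'_le
        intro s hsmem
        have hs' := Finset.mem_filter.1 hsmem
        by_contra hcon
        have := ht'.2 s (by omega)
        dsimp only at hs'
        omega
      · exact hlam_le v t ht'.1 (by omega)
  simp only [Finset.card_range] at this
  omega


noncomputable section
open scoped Classical

variable (u : ℕ → ℚ)

def W (n : ℕ) (e : ℕ → ℕ) : ℚ := ∏ j ∈ Finset.range n, u (e j)

def T (k n : ℕ) : Finset (ℕ → ℕ) := Finset.piAntidiag (Finset.range k) n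

def TD (n i : ℕ) : Finset (ℕ → ℕ) := (T n (n - i)).filter (fun e => Dom n e)

def DS (n i : ℕ) : ℚ := ∑ e ∈ TD n i, W u n e

lemma mem_T {k n : ℕ} {e : ℕ → ℕ} :
    e ∈ T k n ↔ (∑ j ∈ Finset.range k, e j = n) ∧ ∀ j, e j ≠ 0 → j < k := by
  simp [T, Finset.mem_piAntidiag]

lemma rot_mem_T {n m t : ℕ} {e : ℕ → ℕ} (he : e ∈ T n m) :
    (fun j => if j < n then e ((j + t) % n) else 0) ∈ T n m := by
  rw [mem_T] at he ⊢
  constructor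
  · calc ∑ j ∈ Finset.range n, (if j < n then e ((j+t)%n) else 0)
        = ∑ j ∈ Finset.range n, e ((j+t)%n) :=
          Finset.sum_congr rfl fun j hj => if_pos (Finset.mem_range.1 hj)
      _ = ∑ j ∈ Finset.range n, e j := sum_rot n t (fun x => e x)
      _ = m := he.1
  · intro j hj
    by_contra h
    push_neg at h
    rw [if_neg (by omega)] at hj
    exact hj rfl

lemma cyc (n i : ℕ) (hi : 1 ≤ i) (hin : i ≤ n) :
    (i : ℚ) * ∑ e ∈ T n (n - i), W u n e = (n : ℚ) * DS u n i := by
  have hstep1 : ∀ e ∈ T n (n - i),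
      (i : ℚ) * W u n e
        = ∑ t ∈ Finset.range n, (if Dom n (fun j => e ((j + t) % n)) then W u n e else 0) := by
    intro e he
    rw [← Finset.sum_filter, Finset.sum_const,
      cycle_count n i e hi (by rw [mem_T] at he; unfold P; omega), nsmul_eq_mul]
  calc (i:ℚ) * ∑ e ∈ T n (n-i), W u n e
      = ∑ e ∈ T n (n-i), (i:ℚ) * W u n e := Finset.mul_sum _ _ _
    _ = ∑ e ∈ T n (n-i), ∑ t ∈ Finset.range n,
          (if Dom n (fun j => e ((j + t) % n)) then W u n e else 0) :=
        Finset.sum_congr rfl hstep1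
    _ = ∑ t ∈ Finset.range n, ∑ e ∈ T n (n-i),
          (if Dom n (fun j => e ((j + t) % n)) then W u n e else 0) := Finset.sum_comm
    _ = ∑ _t ∈ Finset.range n, DS u n i := by
        refine Finset.sum_congr rfl fun t ht => ?_
        have htn := Finset.mem_range.1 ht
        rw [DS, TD, Finset.sum_filter]
        refine Finset.sum_nbij' (i := fun e j => if j < n then e ((j + t) % n) else 0)
          (j := fun e j => if j < n then e ((j + (n - t)) % n) else 0)
          (fun e he => rot_mem_T he) (fun e he => rot_mem_T he) ?_ ?_ ?_
        · intro e he
          funext j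
          by_cases hjn : j < n
          · have h1 : (j + (n - t)) % n < n := Nat.mod_lt _ (by omega)
            simp only [if_pos hjn, if_pos h1]
            rw [Nat.mod_add_mod]
            have h2 : j + (n - t) + t = j + n := by omega
            rw [h2, Nat.add_mod_right, Nat.mod_eq_of_lt hjn]
          · simp only [if_neg hjn]
            rw [mem_T] at he
            by_contra h
            have := he.2 j (Ne.symm h)
            omega
        · intro e he
          funext j
          by_cases hjn : j < n
          · have h1 : (j + t) % n < n := Nat.mod_lt _ (by omega)
            simp only [if_pos hjn, if_pos h1]
            rw [Nat.mod_add_mod]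
            have h2 : j + t + (n - t) = j + n := by omega
            rw [h2, Nat.add_mod_right, Nat.mod_eq_of_lt hjn]
          · simp only [if_neg hjn]
            rw [mem_T] at he
            by_contra h
            have := he.2 j (Ne.symm h)
            omega
        · intro e _
          have hdom : Dom n (fun j => e ((j + t) % n))
              ↔ Dom n (fun j => if j < n then e ((j + t) % n) else 0) :=
            (Dom_congr fun j hj => by rw [if_pos hj]).symm
          have hW : W u n (fun j => if j < n then e ((j + t) % n) else 0) = W u n e := by
            unfold W
            calc ∏ j ∈ Finset.range n, u (if j < n then e ((j+t)%n) else 0)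
                = ∏ j ∈ Finset.range n, u (e ((j+t)%n)) :=
                  Finset.prod_congr rfl fun j hj => by rw [if_pos (Finset.mem_range.1 hj)]
              _ = ∏ j ∈ Finset.range n, u (e j) := prod_rot n t (fun x => u (e x))
          by_cases hd : Dom n (fun j => e ((j + t) % n))
          · rw [if_pos hd, if_pos (hdom.1 hd), hW]
          · rw [if_neg hd, if_neg (fun hc => hd (hdom.2 hc))]
    _ = (n : ℚ) * DS u n i := by
        rw [Finset.sum_const, Finset.card_range, nsmul_eq_mul]

def glue (p : ℕ) (a b : ℕ → ℕ) : ℕ → ℕ := fun j => if j < p then a j else b (j - p)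

lemma glue_lt {p j : ℕ} {a b : ℕ → ℕ} (h : j < p) : glue p a b j = a j := if_pos h

lemma glue_ge {p j : ℕ} {a b : ℕ → ℕ} (h : p ≤ j) : glue p a b j = b (j - p) :=
  if_neg (by omega)

lemma P_mono {E : ℕ → ℕ} {s t : ℕ} (h : s ≤ t) : P E s ≤ P E t := by
  unfold P
  exact Finset.sum_le_sum_of_subset (Finset.range_subset_range.2 h)

lemma P_add (E : ℕ → ℕ) (c s : ℕ) : P E (c + s) = P E c + ∑ j ∈ Finset.range s, E (c + j) :=
  Finset.sum_range_add E c s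

lemma P_glue_left {p s : ℕ} {a b : ℕ → ℕ} (h : s ≤ p) : P (glue p a b) s = P a s :=
  P_congr fun j hj => glue_lt (by omega)

lemma P_glue_add (p s : ℕ) (a b : ℕ → ℕ) : P (glue p a b) (p + s) = P a p + P b s := by
  rw [P_add]
  congr 1
  · exact P_glue_left le_rfl
  · refine Finset.sum_congr rfl fun j _ => ?_
    rw [glue_ge (by omega)]
    congr 1
    omega


lemma W_glue {p q : ℕ} (a b : ℕ → ℕ) : W u (p + q) (glue p a b) = W u p a * W u q b := by
  unfold W
  rw [Finset.prod_range_add]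
  congr 1
  · exact Finset.prod_congr rfl fun j hj => by rw [glue_lt (Finset.mem_range.1 hj)]
  · refine Finset.prod_congr rfl fun j _ => ?_
    rw [glue_ge (by omega)]
    congr 2
    omega

def cut (m : ℕ) (E : ℕ → ℕ) : ℕ := Nat.findGreatest (fun s => s = P E s + 1) m

lemma cut_facts {m r : ℕ} (hr : 1 ≤ r) (hm : r + 1 ≤ m) {E : ℕ → ℕ}
    (hT : E ∈ T m (m - (r+1))) (hD : Dom m E) :
    1 ≤ cut m E ∧ cut m E < m ∧ cut m E = P E (cut m E) + 1 ∧
      (∀ s, cut m E < s → s ≤ m → P E s + 2 ≤ s) := by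
  rw [mem_T] at hT
  have hPm : P E m = m - (r+1) := hT.1
  have hpred1 : 1 = P E 1 + 1 := by
    have := hD 1 le_rfl (by omega)
    omega
  have hc1 : 1 ≤ cut m E := Nat.le_findGreatest (by omega) hpred1
  have hcspec : cut m E = P E (cut m E) + 1 :=
    Nat.findGreatest_spec (P := fun s => s = P E s + 1) (by omega) hpred1
  have hcle : cut m E ≤ m := Nat.findGreatest_le m
  have hclt : cut m E < m := by
    rcases lt_or_eq_of_le hcle with h | h
    · exact h
    · exfalso
      rw [h] at hcspec
      omega
  refine ⟨hc1, hclt, hcspec, fun s hs1 hs2 => ?_⟩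
  have hng := Nat.findGreatest_is_greatest (P := fun s => s = P E s + 1) hs1 hs2
  have := hD s (by omega) hs2
  unfold Dom at hD
  omega

lemma concat (m r : ℕ) (hr : 1 ≤ r) (hm : r + 1 ≤ m) :
    ∑ pq ∈ Finset.HasAntidiagonal.antidiagonal m,
      (if pq.1 = 0 then 0 else DS u pq.1 1) * (if r ≤ pq.2 then DS u pq.2 r else 0)
    = DS u m (r+1) := by
  have hsummand : ∀ pq ∈ Finset.HasAntidiagonal.antidiagonal m,
      (if pq.1 = 0 then 0 else DS u pq.1 1) * (if r ≤ pq.2 then DS u pq.2 r else 0)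
      = ∑ a ∈ (if pq.1 = 0 then (∅ : Finset (ℕ → ℕ)) else TD pq.1 1),
          ∑ b ∈ (if r ≤ pq.2 then TD pq.2 r else ∅),
          W u pq.1 a * W u pq.2 b := by
    intro pq _
    by_cases h1 : pq.1 = 0
    · simp [h1]
    · by_cases h2 : r ≤ pq.2
      · rw [if_neg h1, if_pos h2, if_neg h1, if_pos h2, DS, DS, Finset.sum_mul_sum]
      · simp [h1, h2]
  rw [Finset.sum_congr rfl hsummand]
  have hprod : ∀ pq ∈ Finset.HasAntidiagonal.antidiagonal m,
      (∑ a ∈ (if pq.1 = 0 then (∅ : Finset (ℕ → ℕ)) else TD pq.1 1),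
        ∑ b ∈ (if r ≤ pq.2 then TD pq.2 r else ∅), W u pq.1 a * W u pq.2 b)
      = ∑ ab ∈ ((if pq.1 = 0 then (∅ : Finset (ℕ → ℕ)) else TD pq.1 1) ×ˢ
          (if r ≤ pq.2 then TD pq.2 r else ∅)), W u pq.1 ab.1 * W u pq.2 ab.2 :=
    fun pq _ => (Finset.sum_product _ _ (fun ab => W u pq.1 ab.1 * W u pq.2 ab.2)).symm
  rw [Finset.sum_congr rfl hprod,
    Finset.sum_sigma' (Finset.HasAntidiagonal.antidiagonal m)
      (fun pq => (if pq.1 = 0 then (∅ : Finset (ℕ → ℕ)) else TD pq.1 1) ×ˢ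
        (if r ≤ pq.2 then TD pq.2 r else ∅))
      (fun pq ab => W u pq.1 ab.1 * W u pq.2 ab.2)]
  · rw [DS]
    refine Finset.sum_nbij' (i := fun x => glue x.1.1 x.2.1 x.2.2)
      (j := fun E => ⟨(cut m E, m - cut m E),
        ((fun j => if j < cut m E then E j else 0),
         (fun j => if j < m - cut m E then E (cut m E + j) else 0))⟩)
      ?_ ?_ ?_ ?_ ?_
    · -- forward membership
      rintro ⟨⟨p, q⟩, a, b⟩ hx
      simp only [Finset.mem_sigma, Finset.mem_product] at hx
      obtain ⟨hpq, ha, hb⟩ := hx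
      have hpq' : p + q = m := Finset.HasAntidiagonal.mem_antidiagonal.1 hpq
      by_cases h1 : p = 0
      · rw [if_pos h1] at ha; exact absurd ha (Finset.notMem_empty _)
      by_cases h2 : r ≤ q
      swap
      · rw [if_neg h2] at hb; exact absurd hb (Finset.notMem_empty _)
      rw [if_neg h1] at ha
      rw [if_pos h2] at hb
      dsimp only
      rw [TD, Finset.mem_filter] at ha hb ⊢
      obtain ⟨haT, haD⟩ := ha
      obtain ⟨hbT, hbD⟩ := hb
      rw [mem_T] at haT hbT
      have hp1 : 1 ≤ p := by omega
      have hPa : P a p = p - 1 := haT.1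
      have hPb : P b q = q - r := hbT.1
      constructor
      · rw [mem_T]
        constructor
        · show P (glue p a b) m = m - (r+1)
          have h := P_glue_add p q a b
          rw [hpq'] at h
          omega
        · intro j hj
          by_contra hcon
          push_neg at hcon
          have hjp : ¬ j < p := by omega
          rw [glue_ge (by omega)] at hj
          have := hbT.2 (j - p) hj
          omega
      · intro s hs1 hs2
        by_cases hsp : s ≤ p
        · rw [P_glue_left hsp]
          exact haD s hs1 hsp
        · push_neg at hsp
          have hseq : s = p + (s - p) := by omega
          rw [hseq, P_glue_add]
          have := hbD (s - p) (by omega) (by omega)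
          omega
    · -- backward membership
      intro E hE
      rw [TD, Finset.mem_filter] at hE
      obtain ⟨hET, hED⟩ := hE
      obtain ⟨hc1, hclt, hcspec, hcmax⟩ := cut_facts hr hm hET hED
      rw [mem_T] at hET
      have hPm : P E m = m - (r+1) := hET.1
      set c := cut m E with hc
      have hPc : P E c = c - 1 := by omega
      have hqr : r ≤ m - c := by
        have := P_mono (E := E) (le_of_lt hclt)
        omega
      simp only [Finset.mem_sigma, Finset.mem_product, Finset.HasAntidiagonal.mem_antidiagonal]
      refine ⟨by omega, ?_, ?_⟩
      · rw [if_neg (by omega : ¬ c = 0), TD, Finset.mem_filter]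
        constructor
        · rw [mem_T]
          constructor
          · calc ∑ j ∈ Finset.range c, (if j < c then E j else 0)
                = ∑ j ∈ Finset.range c, E j :=
                  Finset.sum_congr rfl fun j hj => if_pos (Finset.mem_range.1 hj)
              _ = c - 1 := hPc
          · intro j hj
            by_contra hcon
            rw [if_neg (by omega)] at hj
            exact hj rfl
        · intro s hs1 hs2
          have : P (fun j => if j < c then E j else 0) s = P E s :=
            P_congr fun j hj => if_pos (by omega)
          rw [this]
          exact hED s hs1 (by omega)
      · rw [if_pos hqr, TD, Finset.mem_filter]
        have hshift : ∀ s, s ≤ m - c →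
            P (fun j => if j < m - c then E (c + j) else 0) s + P E c = P E (c + s) := by
          intro s hs
          rw [P_add]
          have : P (fun j => if j < m - c then E (c + j) else 0) s
              = ∑ j ∈ Finset.range s, E (c + j) := by
            refine Finset.sum_congr rfl fun j hj => if_pos ?_
            have := Finset.mem_range.1 hj
            omega
          omega
        constructor
        · rw [mem_T]
          constructor
          · show P (fun j => if j < m - c then E (c + j) else 0) (m - c) = m - c - r
            have h1 := hshift (m - c) le_rfl
            have h2 : c + (m - c) = m := by omega
            rw [h2] at h1
            omega
          · intro j hj
            by_contra hcon
            rw [if_neg (by omega)] at hj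
            exact hj rfl
        · intro s hs1 hs2
          show P (fun j => if j < m - c then E (c + j) else 0) s < s
          have h1 := hshift s hs2
          have h2 := hcmax (c + s) (by omega) (by omega)
          omega
    · -- left inverse
      rintro ⟨⟨p, q⟩, a, b⟩ hx
      simp only [Finset.mem_sigma, Finset.mem_product] at hx
      obtain ⟨hpq, ha, hb⟩ := hx
      have hpq' : p + q = m := Finset.HasAntidiagonal.mem_antidiagonal.1 hpq
      by_cases h1 : p = 0
      · rw [if_pos h1] at ha; exact absurd ha (Finset.notMem_empty _)
      by_cases h2 : r ≤ q
      swap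
      · rw [if_neg h2] at hb; exact absurd hb (Finset.notMem_empty _)
      rw [if_neg h1] at ha
      rw [if_pos h2] at hb
      rw [TD, Finset.mem_filter] at ha hb
      obtain ⟨haT, haD⟩ := ha
      obtain ⟨hbT, hbD⟩ := hb
      rw [mem_T] at haT hbT
      have hp1 : 1 ≤ p := by omega
      have hPa : P a p = p - 1 := haT.1
      dsimp only
      have hcut : cut m (glue p a b) = p := by
        unfold cut
        rw [Nat.findGreatest_eq_iff]
        refine ⟨by omega, fun _ => ?_, fun s hs1 hs2 => ?_⟩
        · rw [P_glue_left le_rfl]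
          omega
        · intro hcon
          have hseq : s = p + (s - p) := by omega
          rw [hseq, P_glue_add] at hcon
          have := hbD (s - p) (by omega) (by omega)
          omega
      have htr : (fun j => if j < cut m (glue p a b) then glue p a b j else 0) = a := by
        funext j
        rw [hcut]
        by_cases hj : j < p
        · rw [if_pos hj, glue_lt hj]
        · rw [if_neg hj]
          by_contra hcon
          have := haT.2 j (Ne.symm hcon)
          omega
      have hsh : (fun j => if j < m - cut m (glue p a b) then glue p a b (cut m (glue p a b) + j) else 0) = b := by
        funext j
        rw [hcut]
        by_cases hj : j < m - p
        · rw [if_pos hj, glue_ge (by omega)]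
          congr 1
          omega
        · rw [if_neg hj]
          by_contra hcon
          have := hbT.2 j (Ne.symm hcon)
          omega
      refine Sigma.ext ?_ ?_
      · simp only []
        rw [hcut]
        simp only [Prod.mk.injEq]
        exact ⟨trivial, by omega⟩
      · refine heq_of_eq ?_
        simp only []
        rw [htr, hsh]
    · -- right inverse
      intro E hE
      rw [TD, Finset.mem_filter] at hE
      obtain ⟨hET, hED⟩ := hE
      obtain ⟨hc1, hclt, hcspec, hcmax⟩ := cut_facts hr hm hET hED
      rw [mem_T] at hET
      dsimp only
      funext j
      by_cases hj : j < cut m E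
      · rw [glue_lt hj, if_pos hj]
      · rw [glue_ge (by omega)]
        by_cases hj2 : j - cut m E < m - cut m E
        · rw [if_pos hj2]
          congr 1
          omega
        · rw [if_neg hj2]
          by_contra hcon
          have := hET.2 j (Ne.symm hcon)
          omega
    · -- values match
      rintro ⟨⟨p, q⟩, a, b⟩ hx
      simp only [Finset.mem_sigma] at hx
      have hpq' : p + q = m := Finset.HasAntidiagonal.mem_antidiagonal.1 hx.1
      dsimp only
      rw [← hpq', W_glue]



/-! ### Power series layer -/

def phi : PowerSeries ℚ := PowerSeries.mk fun k => if k = 0 then 0 else DS u k 1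

lemma coeff_phi (k : ℕ) :
    PowerSeries.coeff (R := ℚ) k (phi u) = if k = 0 then 0 else DS u k 1 :=
  PowerSeries.coeff_mk _ _

lemma coeff_phi_pow : ∀ r, 1 ≤ r → ∀ m,
    PowerSeries.coeff (R := ℚ) m (phi u ^ r) = if r ≤ m then DS u m r else 0 := by
  intro r
  induction r with
  | zero => exact fun h => absurd h (by omega)
  | succ r ih =>
    intro _ m
    by_cases hr : r = 0
    · subst hr
      rw [pow_one, coeff_phi]
      by_cases hm : m = 0
      · subst hm; simp
      · rw [if_neg hm, if_pos (by omega)]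
    · have hr1 : 1 ≤ r := by omega
      rw [pow_succ', PowerSeries.coeff_mul]
      have hterm : ∀ pq ∈ Finset.HasAntidiagonal.antidiagonal m,
          PowerSeries.coeff (R := ℚ) pq.1 (phi u) * PowerSeries.coeff (R := ℚ) pq.2 (phi u ^ r)
          = (if pq.1 = 0 then 0 else DS u pq.1 1) * (if r ≤ pq.2 then DS u pq.2 r else 0) := by
        intro pq _
        rw [coeff_phi, ih hr1 pq.2]
      rw [Finset.sum_congr rfl hterm]
      by_cases hm : r + 1 ≤ m
      · rw [concat u m r hr1 hm, if_pos hm]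
      · rw [if_neg hm]
        apply Finset.sum_eq_zero
        intro pq hpq
        have h := Finset.HasAntidiagonal.mem_antidiagonal.1 hpq
        by_cases h1 : pq.1 = 0
        · rw [if_pos h1, zero_mul]
        · rw [if_neg (show ¬ r ≤ pq.2 by omega), mul_zero]

end

lemma coeff_pow_T (f : PowerSeries ℚ) (k n : ℕ) :
    PowerSeries.coeff (R := ℚ) n (f ^ k)
      = ∑ e ∈ T k n, W (fun j => PowerSeries.coeff (R := ℚ) j f) k e := by
  unfold W T
  rw [PowerSeries.coeff_pow, Finset.finsuppAntidiag, Finset.sum_map]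
  simp only [Function.Embedding.coeFn_mk, Finsupp.coe_mk]
  exact Finset.sum_attach _ (fun (e : ℕ → ℕ) => ∏ j ∈ Finset.range k, PowerSeries.coeff (R := ℚ) (e j) f)

lemma coeff_pow_congr (a b : PowerSeries ℚ) (m : ℕ)
    (h : ∀ j ≤ m, PowerSeries.coeff (R := ℚ) j a = PowerSeries.coeff (R := ℚ) j b) (r : ℕ) :
    PowerSeries.coeff (R := ℚ) m (a ^ r) = PowerSeries.coeff (R := ℚ) m (b ^ r) := by
  rw [PowerSeries.coeff_pow, PowerSeries.coeff_pow]
  refine Finset.sum_congr rfl fun l hl => ?_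
  refine Finset.prod_congr rfl fun i hi => ?_
  apply h
  have hmem : ∑ j ∈ Finset.range r, l j = m := (Finset.mem_finsuppAntidiag.1 hl).1
  have h3 : l i ≤ ∑ j ∈ Finset.range r, l j :=
    Finset.single_le_sum (f := fun j : ℕ => (l j : ℕ)) (s := Finset.range r)
      (fun _ _ => Nat.zero_le _) hi
  omega

@[to_additive sum_Icc_one_eq_sum_fin]
lemma prod_Icc_one_eq_prod_fin {M : Type*} [CommMonoid M] (m : ℕ) (h : ℕ → M) :
    ∏ i ∈ Finset.Icc 1 m, h i = ∏ j : Fin m, h (j.1 + 1) := by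
  have hmap : Finset.Icc 1 m
      = (Finset.range m).map ⟨fun j => j + 1, add_left_injective 1⟩ := by
    ext a
    simp only [Finset.mem_Icc, Finset.mem_map, Finset.mem_range, Function.Embedding.coeFn_mk]
    constructor
    · intro ⟨h1, h2⟩
      exact ⟨a - 1, by omega, by omega⟩
    · rintro ⟨i, hi, rfl⟩
      omega
  rw [hmap, Finset.prod_map]
  simp only [Function.Embedding.coeFn_mk]
  rw [← Fin.prod_univ_eq_prod_range (fun j => h (j + 1)) m]

lemma partialBell_eq_coeff (x : ℕ → ℚ) (m r : ℕ) (hr : 1 ≤ r) (hm : r ≤ m) :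
    partialBell x m r = ((m.factorial : ℚ) / r.factorial) *
      PowerSeries.coeff (R := ℚ) m
        ((∑ i ∈ Finset.Icc 1 m,
          PowerSeries.C (R := ℚ) (x i / i.factorial) * PowerSeries.X ^ i) ^ r) := by
  classical
  set y : ℕ → ℚ := fun i => x i / i.factorial with hy
  rw [Finset.sum_pow_eq_sum_piAntidiag, map_sum]
  have hterm : ∀ k ∈ Finset.piAntidiag (Finset.Icc 1 m) r,
      PowerSeries.coeff (R := ℚ) m
        ((Nat.multinomial (Finset.Icc 1 m) k : PowerSeries ℚ) *
          ∏ i ∈ Finset.Icc 1 m, (PowerSeries.C (R := ℚ) (y i) * PowerSeries.X ^ i) ^ k i)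
      = if (∑ i ∈ Finset.Icc 1 m, i * k i) = m then
          (Nat.multinomial (Finset.Icc 1 m) k : ℚ) * ∏ i ∈ Finset.Icc 1 m, y i ^ k i
        else 0 := by
    intro k _
    have hprod : ∏ i ∈ Finset.Icc 1 m, (PowerSeries.C (R := ℚ) (y i) * PowerSeries.X ^ i) ^ k i
        = PowerSeries.C (R := ℚ) (∏ i ∈ Finset.Icc 1 m, y i ^ k i) *
            PowerSeries.X ^ (∑ i ∈ Finset.Icc 1 m, i * k i) := by
      rw [map_prod]
      rw [← Finset.prod_pow_eq_pow_sum]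
      rw [← Finset.prod_mul_distrib]
      refine Finset.prod_congr rfl fun i _ => ?_
      rw [mul_pow, map_pow, ← pow_mul]
    rw [hprod, ← map_natCast (PowerSeries.C (R := ℚ)) (Nat.multinomial (Finset.Icc 1 m) k),
      ← mul_assoc, ← map_mul, PowerSeries.coeff_C_mul_X_pow]
    by_cases hc : (∑ i ∈ Finset.Icc 1 m, i * k i) = m
    · rw [if_pos hc, if_pos hc.symm]
    · rw [if_neg hc, if_neg (fun hcc => hc hcc.symm)]
  rw [Finset.sum_congr rfl hterm]
  rw [← Finset.sum_filter]
  -- now a bijection with bellIndex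
  rw [partialBell, Finset.mul_sum]
  refine Finset.sum_nbij'
    (i := fun c (i : ℕ) => if h : 1 ≤ i ∧ i ≤ m then c ⟨i - 1, by omega⟩ else 0)
    (j := fun k (i : Fin m) => k (i.1 + 1)) ?_ ?_ ?_ ?_ ?_
  · intro c hc
    rw [bellIndex, Finset.mem_filter] at hc
    obtain ⟨_, hc1, hc2⟩ := hc
    have hkey : ∀ (F : ℕ → ℕ → ℕ), (∑ i ∈ Finset.Icc 1 m,
        F i (if h : 1 ≤ i ∧ i ≤ m then c ⟨i - 1, by omega⟩ else 0))
        = ∑ j : Fin m, F (j.1+1) (c j) := by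
      intro F
      rw [sum_Icc_one_eq_sum_fin]
      refine Finset.sum_congr rfl fun j _ => ?_
      rw [dif_pos ⟨by omega, by omega⟩]
      congr 1
    simp only [Finset.mem_filter, Finset.mem_piAntidiag]
    refine ⟨⟨?_, ?_⟩, ?_⟩
    · rw [hkey (fun _ v => v)]
      exact hc1
    · intro i hi
      by_cases h : 1 ≤ i ∧ i ≤ m
      · exact Finset.mem_Icc.2 h
      · rw [dif_neg h] at hi
        exact absurd rfl hi
    · rw [hkey (fun i v => i * v)]
      exact hc2
  · intro k hk
    rw [Finset.mem_filter, Finset.mem_piAntidiag] at hk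
    obtain ⟨⟨hk1, hk2⟩, hk3⟩ := hk
    rw [bellIndex, Finset.mem_filter]
    dsimp only
    refine ⟨?_, ?_, ?_⟩
    · rw [Fintype.mem_piFinset]
      intro j
      rw [Finset.mem_range]
      have : k (j.1 + 1) ≤ ∑ i ∈ Finset.Icc 1 m, k i :=
        Finset.single_le_sum (f := fun i => k i) (fun _ _ => Nat.zero_le _)
          (Finset.mem_Icc.2 ⟨by omega, by omega⟩)
      have hk1' : ∑ i ∈ Finset.Icc 1 m, k i = r := hk1
      omega
    · rw [← sum_Icc_one_eq_sum_fin m (fun i => k i)]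
      exact hk1
    · rw [← sum_Icc_one_eq_sum_fin m (fun i => i * k i)]
      exact hk3
  · intro c hc
    rw [bellIndex, Finset.mem_filter] at hc
    funext i
    dsimp only
    rw [dif_pos ⟨by omega, by omega⟩]
    exact congrArg c (Fin.ext (by simp))
  · intro k hk
    rw [Finset.mem_filter, Finset.mem_piAntidiag] at hk
    obtain ⟨⟨hk1, hk2⟩, hk3⟩ := hk
    funext i
    dsimp only
    by_cases h : 1 ≤ i ∧ i ≤ m
    · rw [dif_pos h]
      congr 1
      omega
    · rw [dif_neg h]
      by_contra hcon
      have := hk2 i (Ne.symm hcon)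
      rw [Finset.mem_Icc] at this
      omega
  · intro c hc
    rw [bellIndex, Finset.mem_filter] at hc
    obtain ⟨_, hc1, hc2⟩ := hc
    set k : ℕ → ℕ := fun i => if h : 1 ≤ i ∧ i ≤ m then c ⟨i - 1, by omega⟩ else 0 with hkdef
    have hkc : ∀ j : Fin m, k (j.1 + 1) = c j := by
      intro j
      rw [hkdef]
      dsimp only
      rw [dif_pos ⟨by omega, by omega⟩]
      exact congrArg c (Fin.ext (by simp))
    have hsum_k : ∑ i ∈ Finset.Icc 1 m, k i = r := by
      rw [sum_Icc_one_eq_sum_fin m (fun i => k i)]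
      rw [Finset.sum_congr rfl (fun j _ => hkc j)]
      exact hc1
    have hprod_fact : ∏ i ∈ Finset.Icc 1 m, (k i).factorial
        = ∏ i : Fin m, (c i).factorial := by
      rw [prod_Icc_one_eq_prod_fin m (fun i => (k i).factorial)]
      exact Finset.prod_congr rfl fun j _ => by rw [hkc j]
    have hprod_y : ∏ i ∈ Finset.Icc 1 m, y i ^ k i
        = ∏ i : Fin m, y (i.1 + 1) ^ c i := by
      rw [prod_Icc_one_eq_prod_fin m (fun i => y i ^ k i)]
      exact Finset.prod_congr rfl fun j _ => by rw [hkc j]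
    have hspec := Nat.multinomial_spec (Finset.Icc 1 m) k
    rw [hsum_k] at hspec
    have hspecQ : ((∏ i ∈ Finset.Icc 1 m, (k i).factorial : ℕ) : ℚ) *
        (Nat.multinomial (Finset.Icc 1 m) k : ℚ) = (r.factorial : ℚ) := by
      exact_mod_cast congrArg (Nat.cast (R := ℚ)) hspec
    have hPf_ne : ((∏ i ∈ Finset.Icc 1 m, (k i).factorial : ℕ) : ℚ) ≠ 0 := by
      have : 0 < ∏ i ∈ Finset.Icc 1 m, (k i).factorial :=
        Finset.prod_pos fun i _ => Nat.factorial_pos _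
      exact_mod_cast this.ne'
    have hr_ne : (r.factorial : ℚ) ≠ 0 := by
      exact_mod_cast (Nat.factorial_pos r).ne'
    have hcast : (∏ i : Fin m, ((c i).factorial : ℚ))
        = ((∏ i ∈ Finset.Icc 1 m, (k i).factorial : ℕ) : ℚ) := by
      rw [hprod_fact]
      push_cast
      rfl
    rw [hcast, hprod_y.symm]
    set Pf : ℚ := ((∏ i ∈ Finset.Icc 1 m, (k i).factorial : ℕ) : ℚ)
    set Mu : ℚ := (Nat.multinomial (Finset.Icc 1 m) k : ℚ)
    set Y : ℚ := ∏ i ∈ Finset.Icc 1 m, y i ^ k i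
    field_simp
    linear_combination (-Y) * hspecQ

end AB

/-- Abbas–Bouroubi identity: if `f` is a formal power series with constant term `1`
and `f_m(i) := m!·[x^m] f^i`, then for `m ≥ r ≥ 1`,
`B_{m,r}(1, f₁(2), f₂(3), …) = C(m-1, r-1) · f_{m-r}(m)`,
the `k`-th Bell argument being `f_{k-1}(k)`. -/
theorem partialBell_powerSeries_pow (f : PowerSeries ℚ)
    (hf : PowerSeries.constantCoeff (R := ℚ) f = 1) (m r : ℕ) (h1 : 1 ≤ r) (h2 : r ≤ m) :
    partialBell (fun k => ((k-1).factorial : ℚ) * PowerSeries.coeff (R := ℚ) (k-1) (f ^ k)) m r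
      = ((m-1).choose (r-1) : ℚ) * (((m-r).factorial : ℚ) * PowerSeries.coeff (R := ℚ) (m-r) (f ^ m)) := by
  classical
  set u : ℕ → ℚ := fun j => PowerSeries.coeff (R := ℚ) j f with hu
  set x : ℕ → ℚ := fun k => ((k-1).factorial : ℚ) * PowerSeries.coeff (R := ℚ) (k-1) (f ^ k) with hx
  have hm0 : (m : ℚ) ≠ 0 := by
    have : 0 < m := by omega
    exact_mod_cast this.ne'
  have hy : ∀ i : ℕ, 1 ≤ i → x i / (i.factorial : ℚ) = AB.DS u i 1 := by
    intro i hi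
    have hcyc := AB.cyc u i 1 le_rfl hi
    have hcoe := AB.coeff_pow_T f i (i - 1)
    rw [← hu] at hcoe
    rw [← hcoe] at hcyc
    push_cast at hcyc
    have hi0 : (i : ℚ) ≠ 0 := by
      have : 0 < i := by omega
      exact_mod_cast this.ne'
    have hfact : (i.factorial : ℚ) = i * ((i-1).factorial : ℚ) := by
      have h' : i.factorial = i * (i-1).factorial := by
        conv_lhs => rw [show i = (i - 1) + 1 by omega]
        rw [Nat.factorial_succ]
        congr 1
        omega
      exact_mod_cast congrArg (Nat.cast (R := ℚ)) h'
    have hfact_ne : ((i-1).factorial : ℚ) ≠ 0 := by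
      exact_mod_cast (Nat.factorial_pos (i-1)).ne'
    rw [hx]
    dsimp only
    rw [hfact]
    field_simp
    linear_combination hcyc
  rw [AB.partialBell_eq_coeff x m r h1 h2]
  have hg_phi : ∀ j ≤ m,
      PowerSeries.coeff (R := ℚ) j (∑ i ∈ Finset.Icc 1 m,
        PowerSeries.C (R := ℚ) (x i / i.factorial) * PowerSeries.X ^ i)
      = PowerSeries.coeff (R := ℚ) j (AB.phi u) := by
    intro j hj
    rw [map_sum, AB.coeff_phi]
    have hterm : ∀ i ∈ Finset.Icc 1 m,
        PowerSeries.coeff (R := ℚ) j (PowerSeries.C (R := ℚ) (x i / i.factorial) * PowerSeries.X ^ i)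
        = if j = i then x i / i.factorial else 0 := fun i _ =>
      PowerSeries.coeff_C_mul_X_pow _ _ _
    rw [Finset.sum_congr rfl hterm, Finset.sum_ite_eq]
    by_cases hj0 : j = 0
    · rw [if_pos hj0, if_neg]
      rw [Finset.mem_Icc]
      omega
    · rw [if_neg hj0, if_pos (Finset.mem_Icc.2 ⟨by omega, hj⟩)]
      exact hy j (by omega)
  rw [AB.coeff_pow_congr _ _ m hg_phi r, AB.coeff_phi_pow u r h1 m, if_pos h2]
  have hcyc2 := AB.cyc u m r h1 h2
  have hcoe2 := AB.coeff_pow_T f m (m - r)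
  rw [← hu] at hcoe2
  rw [← hcoe2] at hcyc2
  -- arithmetic finish
  have hr0 : (r : ℚ) ≠ 0 := by
    have : 0 < r := by omega
    exact_mod_cast this.ne'
  have hmfact : (m.factorial : ℚ) = m * ((m-1).factorial : ℚ) := by
    have h' : m.factorial = m * (m-1).factorial := by
      conv_lhs => rw [show m = (m - 1) + 1 by omega]
      rw [Nat.factorial_succ]
      congr 1
      omega
    exact_mod_cast congrArg (Nat.cast (R := ℚ)) h'
  have hrfact : (r.factorial : ℚ) = r * ((r-1).factorial : ℚ) := by
    have h' : r.factorial = r * (r-1).factorial := by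
      conv_lhs => rw [show r = (r - 1) + 1 by omega]
      rw [Nat.factorial_succ]
      congr 1
      omega
    exact_mod_cast congrArg (Nat.cast (R := ℚ)) h'
  have hch := Nat.choose_mul_factorial_mul_factorial (show r - 1 ≤ m - 1 by omega)
  rw [show m - 1 - (r - 1) = m - r by omega] at hch
  have hchQ : ((m-1).choose (r-1) : ℚ) * ((r-1).factorial : ℚ) * ((m-r).factorial : ℚ)
      = ((m-1).factorial : ℚ) := by
    exact_mod_cast congrArg (Nat.cast (R := ℚ)) hch
  have hrfact_ne : ((r-1).factorial : ℚ) ≠ 0 := by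
    exact_mod_cast (Nat.factorial_pos (r-1)).ne'
  have hDSval : AB.DS u m r = (r : ℚ) * PowerSeries.coeff (R := ℚ) (m - r) (f ^ m) / m := by
    rw [eq_div_iff hm0]
    linear_combination (-1 : ℚ) * hcyc2
  rw [hDSval, hmfact, hrfact]
  set V : ℚ := PowerSeries.coeff (R := ℚ) (m - r) (f ^ m)
  field_simp
  linear_combination (-V) * hchQ
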